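/- Let p₁,…,p_l be distinct primes. The diagonal embedding ρ of Γ = ℤ[1/p₁,…,1/p_l] ⋊ S into G = (ℚ_{p₁} × ⋯ × ℚ_{p_l}) ⋊ S has dense image, where S = {p₁^{n₁}⋯p_l^{n_l} : n_i ∈ ℤ}. -/

import Mathlib

open scoped Padic

/-- The ring `ℤ[1/p₁, …, 1/p_l]` realized as a subring of `ℚ`. -/
def zInvPrimes {l : ℕ} (p : Fin l → ℕ) : Subring ℚ :=
  Subring.closure (Set.range fun i => ((p i : ℚ))⁻¹)

lemma key_approx {l : ℕ} (p : Fin l → ℕ) [∀ i, Fact (p i).Prime]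
    (hinj : Function.Injective p) (a : ∀ i, ℚ_[p i]) {ε : ℝ} (hε : 0 < ε) :
    ∃ r ∈ zInvPrimes p, ∀ i, ‖((r : ℚ) : ℚ_[p i]) - a i‖ < ε := by
  classical
  have hp2 : ∀ i, 2 ≤ p i := fun i => (Fact.out : (p i).Prime).two_le
  have hp2R : ∀ i, (2 : ℝ) ≤ (p i : ℝ) := fun i => by exact_mod_cast hp2 i
  have hq0 : ∀ i, (0 : ℝ) < (p i : ℝ) := fun i => lt_of_lt_of_le two_pos (hp2R i)
  set P : ℕ := ∏ j, p j with hP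
  have hPpos : 0 < P := Finset.prod_pos fun j _ => (Fact.out : (p j).Prime).pos
  -- norm of P in each ℚ_[p i]
  have hnormpj : ∀ i j, j ≠ i → ‖((p j : ℕ) : ℚ_[p i])‖ = 1 := by
    intro i j hji
    have hcast : ((p j : ℕ) : ℚ_[p i]) = ((p j : ℤ) : ℚ_[p i]) := by push_cast; ring
    rw [hcast]
    refine le_antisymm (Padic.norm_int_le_one _) (not_lt.mp ?_)
    rw [Padic.norm_intCast_lt_one_iff, Int.natCast_dvd_natCast,
      Nat.prime_dvd_prime_iff_eq (Fact.out : (p i).Prime) (Fact.out : (p j).Prime)]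
    intro h
    exact hji (hinj h).symm
  have hnormP : ∀ i, ‖((P : ℕ) : ℚ_[p i])‖ = (p i : ℝ)⁻¹ := by
    intro i
    have : ((P : ℕ) : ℚ_[p i]) = ∏ j, ((p j : ℕ) : ℚ_[p i]) := by
      rw [hP]; push_cast; rfl
    rw [this, norm_prod, Finset.prod_eq_single i (fun j _ hj => hnormpj i j hj)
      (fun h => absurd (Finset.mem_univ i) h)]
    exact Padic.norm_p
  -- choose n with ‖a i‖ ≤ (p i)^n
  have hex : ∀ i, ∃ n : ℕ, ‖a i‖ < 2 ^ n := fun i =>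
    pow_unbounded_of_one_lt (‖a i‖) one_lt_two
  choose f hf using hex
  set n : ℕ := Finset.univ.sup f with hn
  have han : ∀ i, ‖a i‖ ≤ (p i : ℝ) ^ n := by
    intro i
    calc ‖a i‖ ≤ 2 ^ n :=
          le_trans (hf i).le (pow_le_pow_right₀ one_le_two (Finset.le_sup (Finset.mem_univ i)))
      _ ≤ (p i : ℝ) ^ n := pow_le_pow_left₀ two_pos.le (hp2R i) n
  -- b i lies in ℤ_[p i]
  set b : ∀ i, ℚ_[p i] := fun i => ((P : ℕ) : ℚ_[p i]) ^ n * a i with hb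
  have hbnorm : ∀ i, ‖b i‖ ≤ 1 := by
    intro i
    rw [hb]
    simp only [norm_mul, norm_pow, hnormP i]
    calc (p i : ℝ)⁻¹ ^ n * ‖a i‖ ≤ (p i : ℝ)⁻¹ ^ n * (p i : ℝ) ^ n :=
          mul_le_mul_of_nonneg_left (han i) (by positivity)
      _ = 1 := by
          rw [← mul_pow, inv_mul_cancel₀ (hq0 i).ne', one_pow]
  set B : ∀ i, ℤ_[p i] := fun i => ⟨b i, hbnorm i⟩ with hB
  -- choose m with 2^{-m} < ε
  obtain ⟨m, hm⟩ : ∃ m : ℕ, ε⁻¹ < 2 ^ m := pow_unbounded_of_one_lt ε⁻¹ one_lt_two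
  have hm' : ∀ i, ((p i : ℝ) ^ m)⁻¹ < ε := by
    intro i
    have h2m : ε⁻¹ < (p i : ℝ) ^ m := lt_of_lt_of_le hm (pow_le_pow_left₀ two_pos.le (hp2R i) m)
    have hpm : (0 : ℝ) < (p i : ℝ) ^ m := pow_pos (hq0 i) m
    exact (inv_lt_comm₀ hpm hε).mpr h2m
  set k : ℕ := n + m with hk
  -- CRT
  have hs : ∀ i ∈ Finset.univ, p i ^ k ≠ 0 := fun i _ =>
    pow_ne_zero _ (Fact.out : (p i).Prime).pos.ne'
  have pp : Set.Pairwise (Finset.univ : Finset (Fin l)) (Function.onFun Nat.Coprime fun i => p i ^ k) := by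
    intro i _ j _ hij
    exact Nat.Coprime.pow _ _
      ((Nat.coprime_primes (Fact.out : (p i).Prime) (Fact.out : (p j).Prime)).mpr
        fun h => hij (hinj h))
  obtain ⟨x, hx⟩ := Nat.chineseRemainderOfFinset (fun i => (B i).appr k)
    (fun i => p i ^ k) Finset.univ hs pp
  -- x approximates b i
  have hxb : ∀ i, ‖((x : ℕ) : ℚ_[p i]) - b i‖ ≤ (p i : ℝ) ^ (-(k : ℤ)) := by
    intro i
    have h1 : ‖((x : ℕ) : ℚ_[p i]) - (((B i).appr k : ℕ) : ℚ_[p i])‖ ≤ (p i : ℝ) ^ (-(k : ℤ)) := by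
      have hdvd : ((p i : ℤ) ^ k) ∣ ((x : ℤ) - ((B i).appr k : ℤ)) := by
        have := (hx i (Finset.mem_univ i)).dvd
        push_cast at this ⊢
        exact dvd_sub_comm.mp this
      have hcast : ((x : ℕ) : ℚ_[p i]) - (((B i).appr k : ℕ) : ℚ_[p i])
          = (((x : ℤ) - ((B i).appr k : ℤ) : ℤ) : ℚ_[p i]) := by push_cast; ring
      rw [hcast]
      exact (Padic.norm_int_le_pow_iff_dvd _ _).mpr hdvd
    have h2 : ‖(((B i).appr k : ℕ) : ℚ_[p i]) - b i‖ ≤ (p i : ℝ) ^ (-(k : ℤ)) := by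
      have := ((B i - (((B i).appr k : ℕ) : ℤ_[p i])).norm_le_pow_iff_mem_span_pow k).mpr (PadicInt.appr_spec k (B i))
      have heq : (((B i).appr k : ℕ) : ℚ_[p i]) - b i
          = -(((B i - ((B i).appr k : ℕ) : ℤ_[p i]) : ℤ_[p i]) : ℚ_[p i]) := by
        push_cast [hB]
        exact (neg_sub _ _).symm
      rw [heq, norm_neg]
      exact le_trans (le_of_eq (PadicInt.padic_norm_e_of_padicInt _)) this
    calc ‖((x : ℕ) : ℚ_[p i]) - b i‖
        = ‖(((x : ℕ) : ℚ_[p i]) - (((B i).appr k : ℕ) : ℚ_[p i]))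
            + ((((B i).appr k : ℕ) : ℚ_[p i]) - b i)‖ := by ring_nf
      _ ≤ max ‖((x : ℕ) : ℚ_[p i]) - (((B i).appr k : ℕ) : ℚ_[p i])‖
            ‖(((B i).appr k : ℕ) : ℚ_[p i]) - b i‖ := Padic.nonarchimedean _ _
      _ ≤ (p i : ℝ) ^ (-(k : ℤ)) := max_le h1 h2
  -- define r
  set r : ℚ := (x : ℚ) * ((P : ℚ) ^ n)⁻¹ with hr
  have hrmem : r ∈ zInvPrimes p := by
    have : r = (x : ℚ) * ∏ j, ((p j : ℚ))⁻¹ ^ n := by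
      rw [hr, hP]
      push_cast
      rw [Finset.prod_pow, Finset.prod_inv_distrib, inv_pow]
    rw [this]
    exact Subring.mul_mem _ (natCast_mem _ x)
      (Subring.prod_mem _ fun j _ => Subring.pow_mem _
        (Subring.subset_closure (Set.mem_range_self j)) n)
  refine ⟨r, hrmem, fun i => ?_⟩
  have hPne : ((P : ℕ) : ℚ_[p i]) ≠ 0 := Nat.cast_ne_zero.mpr hPpos.ne'
  have hre : ((r : ℚ) : ℚ_[p i]) - a i
      = (((x : ℕ) : ℚ_[p i]) - b i) * (((P : ℕ) : ℚ_[p i]) ^ n)⁻¹ := by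
    rw [hr, hb]
    push_cast
    field_simp
  rw [hre, norm_mul, norm_inv, norm_pow, hnormP i]
  have hqne : (p i : ℝ) ≠ 0 := (hq0 i).ne'
  calc ‖((x : ℕ) : ℚ_[p i]) - b i‖ * ((p i : ℝ)⁻¹ ^ n)⁻¹
      ≤ (p i : ℝ) ^ (-(k : ℤ)) * ((p i : ℝ)⁻¹ ^ n)⁻¹ := by
        apply mul_le_mul_of_nonneg_right (hxb i)
        positivity
    _ = ((p i : ℝ) ^ m)⁻¹ := by
        rw [inv_pow, inv_inv, hk]
        rw [show ((p i : ℝ) ^ n : ℝ) = (p i : ℝ) ^ (n : ℤ) from (zpow_natCast _ _).symm,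
          ← zpow_add₀ hqne]
        have : (-(↑(n + m) : ℤ) + n : ℤ) = -(m : ℤ) := by push_cast; ring
        rw [this, zpow_neg, zpow_natCast]
    _ < ε := hm' i

/-- The diagonal embedding of `Γ = ℤ[1/p₁,…,1/p_l] ⋊ S` into
`G = (ℚ_{p₁} × ⋯ × ℚ_{p_l}) ⋊ S`, where `S = {p₁^{n₁}⋯p_l^{n_l}} ≅ ℤ^l`, has dense
image. -/
theorem denseRange_diagonal_embedding {l : ℕ} (p : Fin l → ℕ)
    [∀ i, Fact (p i).Prime] (hinj : Function.Injective p) :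
    DenseRange (fun g : zInvPrimes p × (Fin l → ℤ) =>
      ((fun i => ((g.1 : ℚ) : ℚ_[p i]), g.2) : (∀ i, ℚ_[p i]) × (Fin l → ℤ))) := by
  rw [Metric.denseRange_iff]
  rintro ⟨a, s⟩ ε hε
  obtain ⟨r, hrmem, hr⟩ := key_approx p hinj a hε
  refine ⟨⟨⟨r, hrmem⟩, s⟩, ?_⟩
  rw [Prod.dist_eq]
  refine max_lt ?_ (by simpa using hε)
  rw [dist_pi_lt_iff hε]
  intro i
  rw [dist_eq_norm, norm_sub_rev]
  exact hr i
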